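/- Let m ≥ 1 be an integer and let a, b ∈ ℂ with |a|² + |b|² = 1 and b ≠ 0. Let L = {((a + bᵐ·t)·exp(m·t), b·exp(t)) : t ∈ ℂ, |(a + bᵐ·t)·exp(m·t)|² + |b·exp(t)|² = 1} ⊆ ℂ² be the intersection of the integral curve of (mx + yᵐ) ∂/∂x + y ∂/∂y through (a,b) with the unit sphere. Then the closure of L in ℂ² equals L ∪ {(x,0) : x ∈ ℂ, |x| = 1}. In particular L is not a closed subset of ℂ², while the leaf {(x,0) : |x| = 1} of the intersection foliation is closed. -/

import Mathlib

open Complex Filter Topology Set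

noncomputable section StmtFiveAux

/-- The leaf intersected with the sphere. -/
def Lset (m : ℕ) (a b : ℂ) : Set (ℂ × ℂ) :=
  {p : ℂ × ℂ | ∃ t : ℂ,
    ‖(a + b ^ m * t) * Complex.exp ((m : ℂ) * t)‖ ^ 2 +
      ‖b * Complex.exp t‖ ^ 2 = 1 ∧
    p = ((a + b ^ m * t) * Complex.exp ((m : ℂ) * t), b * Complex.exp t)}

def Cset : Set (ℂ × ℂ) := {p : ℂ × ℂ | p.2 = 0 ∧ ‖p.1‖ = 1}

lemma Cset_closed : IsClosed Cset := by
  have h1 : IsClosed {p : ℂ × ℂ | p.2 = 0} := isClosed_eq continuous_snd continuous_const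
  have h2 : IsClosed {p : ℂ × ℂ | ‖p.1‖ = 1} :=
    isClosed_eq (continuous_norm.comp continuous_fst) continuous_const
  exact h1.inter h2

lemma closure_subset_dir (m : ℕ) (hm : 1 ≤ m) (a b : ℂ) (hb : b ≠ 0) :
    closure (Lset m a b) ⊆ Lset m a b ∪ Cset := by
  intro p hp
  obtain ⟨q, hq, hqp⟩ := mem_closure_iff_seq_limit.1 hp
  choose t ht hq2 using hq
  have hφcont : Continuous (fun s : ℂ =>
      (((a + b ^ m * s) * Complex.exp ((m : ℂ) * s), b * Complex.exp s) : ℂ × ℂ)) := by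
    fun_prop
  by_cases hbdd : ∃ M : ℝ, ∃ᶠ n in atTop, ‖t n‖ ≤ M
  · left
    obtain ⟨M, hM⟩ := hbdd
    obtain ⟨ψ, hψ, hψM⟩ := Filter.extraction_of_frequently_atTop hM
    have hmem : ∀ n, t (ψ n) ∈ Metric.closedBall (0 : ℂ) M := by
      intro n; simpa [Metric.mem_closedBall, dist_eq_norm] using hψM n
    obtain ⟨t₀, _, χ, hχ, hlim⟩ :=
      (isCompact_closedBall (0 : ℂ) M).tendsto_subseq hmem
    have hq' : Tendsto (fun n => q (ψ (χ n))) atTop (𝓝 p) :=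
      hqp.comp ((hψ.comp hχ).tendsto_atTop)
    have hq'' : Tendsto (fun n => q (ψ (χ n))) atTop
        (𝓝 (((a + b ^ m * t₀) * Complex.exp ((m : ℂ) * t₀), b * Complex.exp t₀))) := by
      have := (hφcont.tendsto t₀).comp hlim
      simpa [Function.comp_def, hq2] using this
    have hpφ : p = ((a + b ^ m * t₀) * Complex.exp ((m : ℂ) * t₀), b * Complex.exp t₀) :=
      tendsto_nhds_unique hq' hq''
    refine ⟨t₀, ?_, hpφ⟩
    have hcond : Continuous (fun s : ℂ =>
        ‖(a + b ^ m * s) * Complex.exp ((m : ℂ) * s)‖ ^ 2 +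
          ‖b * Complex.exp s‖ ^ 2) := by
      apply Continuous.add
      · exact (continuous_norm.comp (by fun_prop)).pow 2
      · exact (continuous_norm.comp (by fun_prop)).pow 2
    have h1 : Tendsto (fun n =>
        ‖(a + b ^ m * t (ψ (χ n))) * Complex.exp ((m : ℂ) * t (ψ (χ n)))‖ ^ 2 +
          ‖b * Complex.exp (t (ψ (χ n)))‖ ^ 2) atTop (𝓝
        (‖(a + b ^ m * t₀) * Complex.exp ((m : ℂ) * t₀)‖ ^ 2 +
          ‖b * Complex.exp t₀‖ ^ 2)) := by
      have := (hcond.tendsto t₀).comp hlim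
      simpa [Function.comp_def] using this
    have heq : (fun n => ‖(a + b ^ m * t (ψ (χ n))) *
        Complex.exp ((m : ℂ) * t (ψ (χ n)))‖ ^ 2 +
          ‖b * Complex.exp (t (ψ (χ n)))‖ ^ 2) = fun _ : ℕ => (1 : ℝ) :=
      funext fun n => ht (ψ (χ n))
    rw [heq] at h1
    exact tendsto_nhds_unique h1 tendsto_const_nhds
  · right
    push_neg at hbdd
    have htop : Tendsto (fun n => ‖t n‖) atTop atTop := by
      rw [tendsto_atTop]
      intro M
      have := hbdd M
      filter_upwards [this] with n hn
      exact hn.le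
    -- abs of first coordinate factorization
    have habs1 : ∀ n, ‖a + b ^ m * t n‖ * Real.exp ((m : ℝ) * (t n).re) ≤ 1 := by
      intro n
      have h1 := ht n
      have h2 : (0:ℝ) ≤ ‖b * Complex.exp (t n)‖ ^ 2 := sq_nonneg _
      have h3 : ‖(a + b ^ m * t n) * Complex.exp ((m : ℂ) * t n)‖ ^ 2 ≤ 1 := by
        linarith
      have h4 : ‖(a + b ^ m * t n) * Complex.exp ((m : ℂ) * t n)‖ ≤ 1 := by
        nlinarith [norm_nonneg ((a + b ^ m * t n) * Complex.exp ((m : ℂ) * t n))]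
      calc ‖a + b ^ m * t n‖ * Real.exp ((m : ℝ) * (t n).re)
          = ‖(a + b ^ m * t n) * Complex.exp ((m : ℂ) * t n)‖ := by
            rw [norm_mul, Complex.norm_exp]
            norm_num
        _ ≤ 1 := h4
    have hA : Tendsto (fun n => ‖a + b ^ m * t n‖) atTop atTop := by
      have hbm : (0:ℝ) < ‖b‖ ^ m := pow_pos (norm_pos_iff.mpr hb) m
      have hlow : ∀ n, ‖b‖ ^ m * ‖t n‖ - ‖a‖ ≤
          ‖a + b ^ m * t n‖ := by
        intro n
        have := norm_add_le (-a) (a + b ^ m * t n)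
        simp only [norm_neg] at this
        have h5 : ‖-a + (a + b ^ m * t n)‖ = ‖b‖ ^ m * ‖t n‖ := by
          rw [show -a + (a + b ^ m * t n) = b ^ m * t n by ring, norm_mul, norm_pow]
        rw [h5] at this
        linarith
      refine tendsto_atTop_mono hlow ?_
      exact tendsto_atTop_add_const_right _ _ (htop.const_mul_atTop hbm)
    have hExp : Tendsto (fun n => Real.exp ((m : ℝ) * (t n).re)) atTop (𝓝 0) := by
      have hinv : Tendsto (fun n => (‖a + b ^ m * t n‖)⁻¹) atTop (𝓝 0) :=
        tendsto_inv_atTop_zero.comp hA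
      have hev : ∀ᶠ n in atTop, Real.exp ((m : ℝ) * (t n).re) ≤
          (‖a + b ^ m * t n‖)⁻¹ := by
        filter_upwards [hA.eventually_gt_atTop 0] with n hn
        rw [inv_eq_one_div, le_div_iff₀ hn, mul_comm]
        exact habs1 n
      exact squeeze_zero' (Eventually.of_forall fun n => (Real.exp_pos _).le) hev hinv
    have hre : Tendsto (fun n => (t n).re) atTop atBot := by
      have h6 : Tendsto (fun n => (m : ℝ) * (t n).re) atTop atBot := by
        rwa [← Real.tendsto_exp_comp_nhds_zero]
      have hmR : (0:ℝ) < (m : ℝ) := by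
        have : 1 ≤ (m : ℝ) := by exact_mod_cast hm
        linarith
      have hm0 : (0:ℝ) < (m : ℝ)⁻¹ := by positivity
      have h7 := h6.const_mul_atBot hm0
      have heq7 : (fun n => (m:ℝ)⁻¹ * ((m:ℝ) * (t n).re)) = fun n => (t n).re := by
        funext n; field_simp
      rwa [heq7] at h7
    have hsnd : Tendsto (fun n => (q n).2) atTop (𝓝 (0 : ℂ)) := by
      rw [tendsto_zero_iff_norm_tendsto_zero]
      have heq : ∀ n, ‖(q n).2‖ = ‖b‖ * Real.exp (t n).re := by
        intro n
        rw [hq2 n]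
        simp [Complex.norm_exp]
      simp only [heq]
      have := (Real.tendsto_exp_atBot.comp hre).const_mul (‖b‖)
      simpa using this
    have hp2 : p.2 = 0 :=
      tendsto_nhds_unique ((continuous_snd.tendsto p).comp hqp) hsnd
    have hfst : Tendsto (fun n => ‖(q n).1‖) atTop (𝓝 (‖p.1‖)) :=
      (continuous_norm.tendsto p.1).comp ((continuous_fst.tendsto p).comp hqp)
    have hfst2 : Tendsto (fun n => ‖(q n).1‖ ^ 2) atTop (𝓝 (‖p.1‖ ^ 2)) :=
      hfst.pow 2
    have hfst2' : Tendsto (fun n => ‖(q n).1‖ ^ 2) atTop (𝓝 1) := by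
      have heq : ∀ n, ‖(q n).1‖ ^ 2 = 1 - ‖(q n).2‖ ^ 2 := by
        intro n
        rw [hq2 n]
        have := ht n
        simp only
        linarith
      simp only [heq]
      have hsq : Tendsto (fun n => ‖(q n).2‖ ^ 2) atTop (𝓝 0) := by
        have := ((continuous_norm.tendsto 0).comp hsnd).pow 2
        simpa using this
      have := hsq.const_sub 1
      simpa using this
    have hone : ‖p.1‖ ^ 2 = 1 := tendsto_nhds_unique hfst2 hfst2'
    have : ‖p.1‖ = 1 := by nlinarith [norm_nonneg p.1]
    exact ⟨hp2, this⟩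


/-! ### Construction for the reverse inclusion -/

def Rf (m : ℕ) (b : ℂ) (ρ : ℝ) : ℝ :=
  Real.sqrt (1 - (‖b‖) ^ 2 * Real.exp (2 * ρ)) * Real.exp (-((m : ℝ) * ρ)) /
    (‖b‖) ^ m

def Sf (m : ℕ) (a b : ℂ) (ρ : ℝ) : ℝ :=
  Real.sqrt (Rf m b ρ ^ 2 - (ρ + (a / b ^ m).re) ^ 2)

def θf (m : ℕ) (a b : ℂ) (ρ : ℝ) : ℝ := -(a / b ^ m).im + Sf m a b ρ

def ttf (m : ℕ) (a b : ℂ) (ρ : ℝ) : ℂ := (ρ : ℂ) + (θf m a b ρ : ℝ) * Complex.I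

def zf (m : ℕ) (a b : ℂ) (ρ : ℝ) : ℂ :=
  ((ρ + (a / b ^ m).re : ℝ) : ℂ) + ((Sf m a b ρ : ℝ) : ℂ) * Complex.I

def gf (m : ℕ) (a b : ℂ) (ρ : ℝ) : ℝ :=
  (b ^ m).arg + (zf m a b ρ).arg + (m : ℝ) * θf m a b ρ

def cf (b : ℂ) (ρ : ℝ) : ℝ := Real.sqrt (1 - (‖b‖) ^ 2 * Real.exp (2 * ρ))

lemma zf_re (m : ℕ) (a b : ℂ) (ρ : ℝ) : (zf m a b ρ).re = ρ + (a / b ^ m).re := by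
  simp [zf]

lemma zf_im (m : ℕ) (a b : ℂ) (ρ : ℝ) : (zf m a b ρ).im = Sf m a b ρ := by
  simp [zf]

lemma zf_eq (m : ℕ) (a b : ℂ) (ρ : ℝ) : zf m a b ρ = ttf m a b ρ + a / b ^ m := by
  apply Complex.ext
  · simp [zf, ttf]
  · simp [zf, ttf, θf]

lemma first_eq (m : ℕ) (a b : ℂ) (hb : b ≠ 0) (ρ : ℝ) :
    a + b ^ m * ttf m a b ρ = b ^ m * zf m a b ρ := by
  rw [zf_eq]
  have hbm : b ^ m ≠ 0 := pow_ne_zero _ hb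
  field_simp
  ring

lemma abs_zf (m : ℕ) (a b : ℂ) (ρ : ℝ) (hle : (ρ + (a / b ^ m).re) ^ 2 ≤ Rf m b ρ ^ 2)
    (hR0 : 0 ≤ Rf m b ρ) : ‖zf m a b ρ‖ = Rf m b ρ := by
  rw [Complex.norm_def, Complex.normSq_apply, zf_re, zf_im]
  have hS : Sf m a b ρ ^ 2 = Rf m b ρ ^ 2 - (ρ + (a / b ^ m).re) ^ 2 :=
    Real.sq_sqrt (by linarith)
  have : (ρ + (a / b ^ m).re) * (ρ + (a / b ^ m).re) +
      Sf m a b ρ * Sf m a b ρ = Rf m b ρ ^ 2 := by nlinarith [hS]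
  rw [this]
  exact Real.sqrt_sq hR0

lemma cf_eq (m : ℕ) (b : ℂ) (hb : b ≠ 0) (ρ : ℝ) :
    (‖b‖) ^ m * Rf m b ρ * Real.exp ((m : ℝ) * ρ) = cf b ρ := by
  have hB : (0:ℝ) < ‖b‖ ^ m := pow_pos (norm_pos_iff.mpr hb) m
  rw [Rf, cf, Real.exp_neg]
  field_simp

lemma key_id (m : ℕ) (a b : ℂ) (hb : b ≠ 0) (ρ : ℝ)
    (hle : (ρ + (a / b ^ m).re) ^ 2 ≤ Rf m b ρ ^ 2) (hR0 : 0 ≤ Rf m b ρ) :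
    (a + b ^ m * ttf m a b ρ) * Complex.exp ((m : ℂ) * ttf m a b ρ) =
      ((cf b ρ : ℝ) : ℂ) * Complex.exp (((gf m a b ρ : ℝ) : ℂ) * Complex.I) := by
  have h2 : b ^ m = (((‖b‖ ^ m : ℝ)) : ℂ) *
      Complex.exp (((b ^ m).arg : ℝ) * Complex.I) := by
    have := Complex.norm_mul_exp_arg_mul_I (b ^ m)
    rw [norm_pow] at this
    exact this.symm
  have h3 : zf m a b ρ = ((Rf m b ρ : ℝ) : ℂ) *
      Complex.exp (((zf m a b ρ).arg : ℝ) * Complex.I) := by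
    have := Complex.norm_mul_exp_arg_mul_I (zf m a b ρ)
    rw [abs_zf m a b ρ hle hR0] at this
    exact this.symm
  have h4 : Complex.exp ((m : ℂ) * ttf m a b ρ) =
      ((Real.exp ((m : ℝ) * ρ) : ℝ) : ℂ) *
        Complex.exp ((((m : ℝ) * θf m a b ρ : ℝ) : ℂ) * Complex.I) := by
    rw [Complex.ofReal_exp, ← Complex.exp_add]
    congr 1
    rw [ttf]
    push_cast
    ring
  rw [first_eq m a b hb ρ]
  conv_lhs => rw [h2, h3, h4]
  rw [← cf_eq m b hb ρ, gf]
  push_cast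
  simp only [add_mul, Complex.exp_add]
  ring_nf

lemma sphere_cond (m : ℕ) (a b : ℂ) (hb : b ≠ 0) (ρ : ℝ)
    (hle : (ρ + (a / b ^ m).re) ^ 2 ≤ Rf m b ρ ^ 2) (hR0 : 0 ≤ Rf m b ρ)
    (hc0 : 0 ≤ 1 - (‖b‖) ^ 2 * Real.exp (2 * ρ)) :
    ‖(a + b ^ m * ttf m a b ρ) * Complex.exp ((m : ℂ) * ttf m a b ρ)‖ ^ 2 +
      ‖b * Complex.exp (ttf m a b ρ)‖ ^ 2 = 1 := by
  rw [key_id m a b hb ρ hle hR0]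
  rw [norm_mul, norm_mul, Complex.norm_exp, Complex.norm_exp]
  have h1 : (((gf m a b ρ : ℝ) : ℂ) * Complex.I).re = 0 := by simp
  have h2 : (ttf m a b ρ).re = ρ := by simp [ttf]
  rw [h1, h2, Real.exp_zero, mul_one, Complex.norm_real, Real.norm_eq_abs]
  have hcf : |cf b ρ| = cf b ρ := abs_of_nonneg (Real.sqrt_nonneg _)
  rw [hcf]
  have hc2 : cf b ρ ^ 2 = 1 - (‖b‖) ^ 2 * Real.exp (2 * ρ) := Real.sq_sqrt hc0
  have hexp2 : (‖b‖ * Real.exp ρ) ^ 2 = ‖b‖ ^ 2 * Real.exp (2 * ρ) := by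
    rw [mul_pow, pow_two (Real.exp ρ), ← Real.exp_add, two_mul]
  rw [hc2, hexp2]
  ring


lemma tendsto_aux (K C : ℝ) (hK : 0 < K) :
    Tendsto (fun x : ℝ => K * Real.exp x - 2 * x - C) atTop atTop := by
  have hdiv := Real.tendsto_exp_div_pow_atTop 1
  have hlin : Tendsto (fun x : ℝ => 2 * x - C) atTop atTop := by
    have := tendsto_atTop_add_const_right atTop (-C)
      (tendsto_id.const_mul_atTop (two_pos : (0:ℝ) < 2))
    refine this.congr fun x => ?_
    simp [sub_eq_add_neg]
  refine tendsto_atTop_mono' _ ?_ hlin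
  filter_upwards [hdiv.eventually_ge_atTop (4 / K), eventually_ge_atTop (1:ℝ)] with x h1 h2
  have hx : (0:ℝ) < x := by linarith
  have h3 : 4 * x ≤ K * Real.exp x := by
    have h4 : 4 / K * x ≤ Real.exp x / x ^ 1 * x := by
      exact mul_le_mul_of_nonneg_right h1 hx.le
    rw [pow_one] at h4
    have h5 : Real.exp x / x * x = Real.exp x := div_mul_cancel₀ _ (ne_of_gt hx)
    rw [h5] at h4
    have h6 : 4 / K * x * K = 4 * x := by field_simp
    nlinarith
  linarith

lemma continuous_Rf (m : ℕ) (b : ℂ) : Continuous (Rf m b) := by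
  unfold Rf
  exact ((Real.continuous_sqrt.comp (by continuity)).mul (by continuity)).div_const _

lemma continuous_Sf (m : ℕ) (a b : ℂ) : Continuous (Sf m a b) := by
  unfold Sf
  exact Real.continuous_sqrt.comp
    (((continuous_Rf m b).pow 2).sub ((continuous_id.add continuous_const).pow 2))

lemma continuous_θf (m : ℕ) (a b : ℂ) : Continuous (θf m a b) :=
  continuous_const.add (continuous_Sf m a b)

lemma continuous_zf (m : ℕ) (a b : ℂ) : Continuous (zf m a b) := by
  unfold zf
  exact (Complex.continuous_ofReal.comp (by continuity)).add
    ((Complex.continuous_ofReal.comp (continuous_Sf m a b)).mul continuous_const)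


set_option maxHeartbeats 2000000 in
lemma circle_subset_closure (m : ℕ) (hm : 1 ≤ m) (a b : ℂ) (hb : b ≠ 0) :
    Cset ⊆ closure (Lset m a b) := by
  rintro ⟨x, y⟩ ⟨hy0, hx1⟩
  simp only at hy0 hx1
  subst hy0
  rw [Metric.mem_closure_iff]
  intro ε hε
  have hB : 0 < ‖b‖ := norm_pos_iff.mpr hb
  have hBm : 0 < ‖b‖ ^ m := pow_pos hB m
  have hπ := Real.pi_pos
  have hmR : (1:ℝ) ≤ (m:ℝ) := by exact_mod_cast hm
  -- eventual facts
  have h2ρ : Tendsto (fun ρ : ℝ => 2 * ρ) atBot atBot :=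
    tendsto_id.const_mul_atBot (two_pos : (0:ℝ) < 2)
  have hT2 : Tendsto (fun ρ : ℝ => ‖b‖ ^ 2 * Real.exp (2 * ρ)) atBot (𝓝 0) := by
    have := (Real.tendsto_exp_atBot.comp h2ρ).const_mul (‖b‖ ^ 2)
    simpa using this
  have hT4 : Tendsto (fun ρ : ℝ => ‖b‖ * Real.exp ρ) atBot (𝓝 0) := by
    have := Real.tendsto_exp_atBot.const_mul (‖b‖)
    simpa using this
  have hKpos : 0 < Real.sqrt (1/2) / ‖b‖ ^ m := by positivity
  have hEv : Tendsto (fun ρ : ℝ => Real.sqrt (1/2) / ‖b‖ ^ m * Real.exp (-ρ) -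
      2 * (-ρ) - (2 * (|(a / b ^ m).re| + 1) + 30 * Real.pi)) atBot atTop := by
    have := (tendsto_aux (Real.sqrt (1/2) / ‖b‖ ^ m)
      (2 * (|(a / b ^ m).re| + 1) + 30 * Real.pi) hKpos).comp tendsto_neg_atBot_atTop
    exact this.congr fun ρ => by simp [Function.comp]
  have hP : ∀ᶠ ρ in atBot, ρ ≤ 0 ∧ ‖b‖ ^ 2 * Real.exp (2 * ρ) ≤ 1/2 ∧
      2 * (-ρ + |(a / b ^ m).re| + 1) + 30 * Real.pi ≤
        Real.sqrt (1/2) / ‖b‖ ^ m * Real.exp (-ρ) ∧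
      ‖b‖ * Real.exp ρ < ε ∧ ‖b‖ ^ 2 * Real.exp (2 * ρ) < ε := by
    filter_upwards [eventually_le_atBot (0:ℝ),
      hT2.eventually_le_const (by norm_num : (0:ℝ) < 1/2),
      hEv.eventually_ge_atTop 0,
      hT4.eventually_lt_const hε,
      hT2.eventually_lt_const hε] with ρ p1 p2 p3 p4 p5
    exact ⟨p1, p2, by linarith, p4, p5⟩
  obtain ⟨r₀, hr₀⟩ := eventually_atBot.mp hP
  -- facts at every good ρ
  have hGood : ∀ ρ ≤ r₀,
      0 ≤ 1 - ‖b‖ ^ 2 * Real.exp (2 * ρ) ∧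
      2 * (-ρ + |(a / b ^ m).re| + 1) + 30 * Real.pi ≤ Rf m b ρ ∧
      (ρ + (a / b ^ m).re) ^ 2 ≤ Rf m b ρ ^ 2 ∧
      Rf m b ρ / 2 ≤ Sf m a b ρ ∧ Sf m a b ρ ≤ Rf m b ρ := by
    intro ρ hρ
    obtain ⟨p1, p2, p3, p4, p5⟩ := hr₀ ρ hρ
    have f1 : 0 ≤ 1 - ‖b‖ ^ 2 * Real.exp (2 * ρ) := by linarith
    have f2 : 2 * (-ρ + |(a / b ^ m).re| + 1) + 30 * Real.pi ≤ Rf m b ρ := by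
      have e1 : Real.sqrt (1/2) ≤ Real.sqrt (1 - ‖b‖ ^ 2 * Real.exp (2 * ρ)) :=
        Real.sqrt_le_sqrt (by linarith)
      have e2 : Real.exp (-ρ) ≤ Real.exp (-((m:ℝ) * ρ)) := by
        apply Real.exp_le_exp.2
        nlinarith
      calc 2 * (-ρ + |(a / b ^ m).re| + 1) + 30 * Real.pi
          ≤ Real.sqrt (1/2) / ‖b‖ ^ m * Real.exp (-ρ) := p3
        _ = Real.sqrt (1/2) * Real.exp (-ρ) / ‖b‖ ^ m := by ring
        _ ≤ Rf m b ρ := by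
            rw [Rf]
            gcongr <;> first
              | exact Real.sqrt_nonneg _ | exact e1 | exact e2
    have hR0 : 0 < Rf m b ρ := by
      have : 0 ≤ -ρ := by linarith
      have : 0 ≤ |(a / b ^ m).re| := abs_nonneg _
      linarith
    have habs : |ρ + (a / b ^ m).re| ≤ Rf m b ρ / 2 := by
      have h1 : |ρ + (a / b ^ m).re| ≤ -ρ + |(a / b ^ m).re| := by
        have := abs_add_le ρ ((a / b ^ m).re)
        rw [abs_of_nonpos p1] at this
        linarith
      linarith
    have f3 : (ρ + (a / b ^ m).re) ^ 2 ≤ Rf m b ρ ^ 2 := by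
      nlinarith [_root_.sq_abs (ρ + (a / b ^ m).re), abs_nonneg (ρ + (a / b ^ m).re)]
    have f4 : Rf m b ρ / 2 ≤ Sf m a b ρ := by
      rw [Sf]
      have h1 : (Rf m b ρ / 2) ^ 2 ≤ Rf m b ρ ^ 2 - (ρ + (a / b ^ m).re) ^ 2 := by
        nlinarith [_root_.sq_abs (ρ + (a / b ^ m).re), abs_nonneg (ρ + (a / b ^ m).re)]
      calc Rf m b ρ / 2 = Real.sqrt ((Rf m b ρ / 2) ^ 2) :=
            (Real.sqrt_sq (by linarith)).symm
        _ ≤ _ := Real.sqrt_le_sqrt h1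
    have f5 : Sf m a b ρ ≤ Rf m b ρ := by
      rw [Sf]
      calc Real.sqrt (Rf m b ρ ^ 2 - (ρ + (a / b ^ m).re) ^ 2)
          ≤ Real.sqrt (Rf m b ρ ^ 2) := Real.sqrt_le_sqrt (by nlinarith [sq_nonneg (ρ + (a / b ^ m).re)])
        _ = Rf m b ρ := Real.sqrt_sq hR0.le
    exact ⟨f1, f2, f3, f4, f5⟩
  clear hP hT2 hT4 hEv h2ρ hKpos
  -- notation
  have hr₀0 : r₀ ≤ 0 := (hr₀ r₀ le_rfl).1
  obtain ⟨g1, g2, g3, g4, g5⟩ := hGood r₀ le_rfl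
  obtain ⟨h1', h2', h3', h4', h5'⟩ := hGood (r₀ - 1) (by linarith)
  have hRr0 : 30 * Real.pi ≤ Rf m b r₀ := by
    linarith [abs_nonneg ((a / b ^ m).re)]
  have hRr10 : 0 < Rf m b (r₀ - 1) := by
    linarith [abs_nonneg ((a / b ^ m).re)]
  -- R grows by factor e
  have hRr1 : Real.exp 1 * Rf m b r₀ ≤ Rf m b (r₀ - 1) := by
    have e1 : Real.sqrt (1 - ‖b‖ ^ 2 * Real.exp (2 * r₀)) ≤
        Real.sqrt (1 - ‖b‖ ^ 2 * Real.exp (2 * (r₀ - 1))) := by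
      apply Real.sqrt_le_sqrt
      have h := Real.exp_le_exp.2 (show 2 * (r₀ - 1) ≤ 2 * r₀ by linarith)
      have h2 := mul_le_mul_of_nonneg_left h (sq_nonneg (‖b‖))
      linarith
    have e2 : Real.exp 1 * Real.exp (-((m:ℝ) * r₀)) ≤ Real.exp (-((m:ℝ) * (r₀ - 1))) := by
      rw [← Real.exp_add]
      apply Real.exp_le_exp.2
      have : (m:ℝ) * (r₀ - 1) = (m:ℝ) * r₀ - (m:ℝ) := by ring
      linarith
    have e3 : Real.exp 1 * (Real.sqrt (1 - ‖b‖ ^ 2 * Real.exp (2 * r₀)) *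
        Real.exp (-((m:ℝ) * r₀))) ≤
        Real.sqrt (1 - ‖b‖ ^ 2 * Real.exp (2 * (r₀ - 1))) *
          Real.exp (-((m:ℝ) * (r₀ - 1))) := by
      calc Real.exp 1 * (Real.sqrt (1 - ‖b‖ ^ 2 * Real.exp (2 * r₀)) *
            Real.exp (-((m:ℝ) * r₀)))
          = Real.sqrt (1 - ‖b‖ ^ 2 * Real.exp (2 * r₀)) *
            (Real.exp 1 * Real.exp (-((m:ℝ) * r₀))) := by ring
        _ ≤ _ := by
            apply mul_le_mul e1 e2 (by positivity) (Real.sqrt_nonneg _)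
    rw [Rf, Rf]
    rw [show Real.exp 1 * (Real.sqrt (1 - ‖b‖ ^ 2 * Real.exp (2 * r₀)) *
      Real.exp (-((m:ℝ) * r₀)) / ‖b‖ ^ m) =
      Real.exp 1 * (Real.sqrt (1 - ‖b‖ ^ 2 * Real.exp (2 * r₀)) *
      Real.exp (-((m:ℝ) * r₀))) / ‖b‖ ^ m by ring]
    gcongr
  -- S grows by at least 3π
  have hexpe : (2.7 : ℝ) ≤ Real.exp 1 := by
    have := Real.exp_one_gt_d9
    linarith
  have hstep : Sf m a b r₀ + 3 * Real.pi ≤ Sf m a b (r₀ - 1) := by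
    have h9 : 2.7 * Rf m b r₀ ≤ Real.exp 1 * Rf m b r₀ := by nlinarith
    linarith
  -- the angle sweeps at least 2π
  have hSr1pos : 0 < Sf m a b (r₀ - 1) := by linarith
  have hgdiff : gf m a b r₀ + 2 * Real.pi ≤ gf m a b (r₀ - 1) := by
    have ha1 : 0 ≤ (zf m a b (r₀ - 1)).arg := by
      rw [Complex.arg_nonneg_iff, zf_im]
      exact hSr1pos.le
    have ha2 : (zf m a b r₀).arg ≤ Real.pi := Complex.arg_le_pi _
    have hd : 3 * Real.pi ≤ Sf m a b (r₀ - 1) - Sf m a b r₀ := by linarith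
    have hmd := mul_nonneg (sub_nonneg.2 hmR)
      (show (0:ℝ) ≤ Sf m a b (r₀ - 1) - Sf m a b r₀ by linarith)
    rw [gf, gf, θf, θf]
    nlinarith [hmd]
  -- continuity of the angle function
  have hSpos : ∀ ρ ∈ Icc (r₀ - 1) r₀, 0 < Sf m a b ρ := by
    intro ρ hρ
    obtain ⟨_, f2, _, f4, _⟩ := hGood ρ hρ.2
    have : 0 < Rf m b ρ := by
      have := hρ.2
      linarith [abs_nonneg ((a / b ^ m).re)]
    linarith
  have hgc : ContinuousOn (gf m a b) (Icc (r₀ - 1) r₀) := by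
    apply ContinuousOn.add
    apply ContinuousOn.add continuousOn_const
    · intro ρ hρ
      refine (ContinuousAt.comp (Complex.continuousAt_arg ?_)
        (continuous_zf m a b).continuousAt).continuousWithinAt
      rw [Complex.mem_slitPlane_iff]
      right
      rw [zf_im]
      exact ne_of_gt (hSpos ρ hρ)
    · exact (continuous_const.mul (continuous_θf m a b)).continuousOn
  -- intermediate value theorem
  have hIcc : r₀ - 1 ≤ r₀ := by linarith
  have h2π : (0:ℝ) < 2 * Real.pi := by linarith
  set k : ℤ := ⌈(gf m a b r₀ - x.arg) / (2 * Real.pi)⌉ with hkdef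
  have hy1 : gf m a b r₀ ≤ x.arg + 2 * Real.pi * k := by
    have h1 := Int.le_ceil ((gf m a b r₀ - x.arg) / (2 * Real.pi))
    rw [div_le_iff₀ h2π] at h1
    linarith
  have hy2 : x.arg + 2 * Real.pi * k ≤ gf m a b (r₀ - 1) := by
    have h1 := Int.ceil_lt_add_one ((gf m a b r₀ - x.arg) / (2 * Real.pi))
    have h2 : ((k:ℝ) - 1) * (2 * Real.pi) <
        (gf m a b r₀ - x.arg) / (2 * Real.pi) * (2 * Real.pi) :=
      mul_lt_mul_of_pos_right (by linarith) h2π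
    rw [div_mul_cancel₀ _ (ne_of_gt h2π)] at h2
    linarith
  obtain ⟨ρ, hρI, hgρ⟩ := intermediate_value_Icc' hIcc hgc ⟨hy1, hy2⟩
  obtain ⟨f1, f2, f3, f4, f5⟩ := hGood ρ hρI.2
  obtain ⟨p1, p2, p3, p4, p5⟩ := hr₀ ρ hρI.2
  have hR0 : 0 ≤ Rf m b ρ := by
    have := hρI.2
    linarith [abs_nonneg ((a / b ^ m).re)]
  refine ⟨((a + b ^ m * ttf m a b ρ) * Complex.exp ((m:ℂ) * ttf m a b ρ),
    b * Complex.exp (ttf m a b ρ)), ⟨ttf m a b ρ, sphere_cond m a b hb ρ f3 hR0 f1, rfl⟩, ?_⟩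
  rw [key_id m a b hb ρ f3 hR0]
  have hgx : Complex.exp (((gf m a b ρ : ℝ) : ℂ) * Complex.I) = x := by
    rw [hgρ]
    have hsplit : ((x.arg + 2 * Real.pi * (k:ℝ) : ℝ) : ℂ) * Complex.I =
        (x.arg : ℂ) * Complex.I + (k:ℂ) * (2 * (Real.pi:ℂ) * Complex.I) := by
      push_cast
      ring
    rw [hsplit, Complex.exp_add, Complex.exp_int_mul_two_pi_mul_I, mul_one]
    have := Complex.norm_mul_exp_arg_mul_I x
    rwa [hx1, Complex.ofReal_one, one_mul] at this
  rw [hgx, Prod.dist_eq]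
  have hcρ : cf b ρ ≤ 1 := by
    rw [cf]
    refine Real.sqrt_le_one.mpr ?_
    have := mul_nonneg (sq_nonneg (‖b‖)) (Real.exp_pos (2*ρ)).le
    linarith
  have hc0' : 0 ≤ cf b ρ := Real.sqrt_nonneg _
  have hcsq : cf b ρ ^ 2 = 1 - ‖b‖ ^ 2 * Real.exp (2*ρ) := by
    rw [cf]
    exact Real.sq_sqrt f1
  have hc1 : 1 - cf b ρ ≤ ‖b‖ ^ 2 * Real.exp (2*ρ) := by
    nlinarith [hcsq, hc0', hcρ, mul_nonneg hc0' (sub_nonneg.2 hcρ)]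
  apply max_lt
  · simp only
    rw [Complex.dist_eq]
    have hfact : x - ((cf b ρ : ℝ) : ℂ) * x = ((1 - cf b ρ : ℝ) : ℂ) * x := by
      push_cast
      ring
    rw [hfact, norm_mul, hx1, mul_one, Complex.norm_real, Real.norm_eq_abs,
      _root_.abs_of_nonneg (show (0:ℝ) ≤ 1 - cf b ρ by linarith)]
    linarith
  · simp only
    rw [Complex.dist_eq, zero_sub, norm_neg, norm_mul, Complex.norm_exp]
    have : (ttf m a b ρ).re = ρ := by simp [ttf]
    rw [this]
    exact p4


lemma Lset_not_closed (m : ℕ) (hm : 1 ≤ m) (a b : ℂ) (hb : b ≠ 0) :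
    ¬ IsClosed (Lset m a b) := by
  intro h
  have hc : ((1:ℂ), (0:ℂ)) ∈ Cset := ⟨rfl, by simp⟩
  have h1 : ((1:ℂ), (0:ℂ)) ∈ Lset m a b := by
    have := circle_subset_closure m hm a b hb hc
    rwa [h.closure_eq] at this
  obtain ⟨t, _, hpt⟩ := h1
  have h2 : (0:ℂ) = b * Complex.exp t := congrArg Prod.snd hpt
  exact (mul_ne_zero hb (Complex.exp_ne_zero t)) h2.symm

lemma closure_Lset (m : ℕ) (hm : 1 ≤ m) (a b : ℂ) (hb : b ≠ 0) :
    closure (Lset m a b) = Lset m a b ∪ Cset :=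
  Set.Subset.antisymm (closure_subset_dir m hm a b hb)
    (Set.union_subset subset_closure (circle_subset_closure m hm a b hb))

end StmtFiveAux

/-- For m ≥ 1 and (a,b) on the unit sphere of ℂ² with b ≠ 0, the closure
in ℂ² of the intersection L of the integral curve of (mx + yᵐ)∂/∂x + y∂/∂y through
(a,b) with the unit sphere equals L ∪ ({y = 0} ∩ S³); in particular L is not closed
while {(x,0) : |x| = 1} is closed. -/
theorem stmt5 (m : ℕ) (hm : 1 ≤ m) (a b : ℂ)
    (hab : ‖a‖ ^ 2 + ‖b‖ ^ 2 = 1) (hb : b ≠ 0) :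
    closure {p : ℂ × ℂ | ∃ t : ℂ,
        ‖(a + b ^ m * t) * Complex.exp ((m : ℂ) * t)‖ ^ 2 +
          ‖b * Complex.exp t‖ ^ 2 = 1 ∧
        p = ((a + b ^ m * t) * Complex.exp ((m : ℂ) * t), b * Complex.exp t)} =
      {p : ℂ × ℂ | ∃ t : ℂ,
        ‖(a + b ^ m * t) * Complex.exp ((m : ℂ) * t)‖ ^ 2 +
          ‖b * Complex.exp t‖ ^ 2 = 1 ∧
        p = ((a + b ^ m * t) * Complex.exp ((m : ℂ) * t), b * Complex.exp t)} ∪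
      {p : ℂ × ℂ | p.2 = 0 ∧ ‖p.1‖ = 1} ∧
    ¬ IsClosed {p : ℂ × ℂ | ∃ t : ℂ,
        ‖(a + b ^ m * t) * Complex.exp ((m : ℂ) * t)‖ ^ 2 +
          ‖b * Complex.exp t‖ ^ 2 = 1 ∧
        p = ((a + b ^ m * t) * Complex.exp ((m : ℂ) * t), b * Complex.exp t)} ∧
    IsClosed {p : ℂ × ℂ | p.2 = 0 ∧ ‖p.1‖ = 1} :=
  ⟨closure_Lset m hm a b hb, Lset_not_closed m hm a b hb, Cset_closed⟩
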